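/- If f : GF(p)^n → GF(p) is bent and weakly regular with μ-regular dual f*, then f* is bent and weakly regular with μ^{-1}-regular dual f** given by f**(x) = f(-x). Moreover, if f is also even, then f* is even and f** = f. -/

import Mathlib

open Finset

/-- The primitive `p`-th root of unity `ζ = e^(2πi/p)`. -/
noncomputable def zeta (p : ℕ) : ℂ := Complex.exp (2 * Real.pi * Complex.I / p)

/-- The Walsh transform of `f : GF(p)^n → GF(p)`. -/
noncomputable def walsh (p n : ℕ) [NeZero p] (f : (Fin n → ZMod p) → ZMod p)
    (u : Fin n → ZMod p) : ℂ :=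
  ∑ x : Fin n → ZMod p, zeta p ^ (f x - ∑ i, u i * x i).val

lemma addChar_map_sum {A M : Type*} [AddCommMonoid A] [CommMonoid M] (ψ : AddChar A M)
    {ι : Type*} (s : Finset ι) (g : ι → A) : ψ (∑ i ∈ s, g i) = ∏ i ∈ s, ψ (g i) := by
  induction s using Finset.cons_induction with
  | empty => simp
  | cons a s h ih => rw [Finset.sum_cons, Finset.prod_cons, AddChar.map_add_eq_mul, ih]

lemma zeta_prim (p : ℕ) [NeZero p] : IsPrimitiveRoot (zeta p) p :=
  Complex.isPrimitiveRoot_exp p (NeZero.ne p)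

lemma abs_zeta (p : ℕ) : ‖zeta p‖ = 1 := by
  rw [zeta, Complex.norm_exp]
  have : (2 * ↑Real.pi * Complex.I / ↑p).re = 0 := by
    simp [Complex.div_re, Complex.mul_re, Complex.mul_im]
  rw [this, Real.exp_zero]

/-- If `f` is bent and weakly regular with `μ`-regular dual `f*`, then `f*` is
bent and weakly regular with `μ⁻¹`-regular dual `f**` given by `f**(x) = f(-x)`.
If moreover `f` is even, then `f*` is even and `f** = f`. -/
theorem dual_of_weakly_regular_bent (p n : ℕ) (hp : p.Prime) [NeZero p]
    (f fstar : (Fin n → ZMod p) → ZMod p) (μ : ℂ) (hμ : ‖μ‖ = 1)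
    (hbent : ∀ u, ‖walsh p n f u‖ = (p : ℝ) ^ ((n : ℝ) / 2))
    (hdual : ∀ u, walsh p n f u = μ * zeta p ^ (fstar u).val * ((p : ℝ) ^ ((n : ℝ) / 2) : ℝ)) :
    (∀ u, ‖walsh p n fstar u‖ = (p : ℝ) ^ ((n : ℝ) / 2)) ∧
    (∀ u, walsh p n fstar u =
        μ⁻¹ * zeta p ^ (f (-u)).val * ((p : ℝ) ^ ((n : ℝ) / 2) : ℝ)) ∧
    ((∀ x, f (-x) = f x) →
        (∀ x, fstar (-x) = fstar x) ∧ (fun x => f (-x)) = f) := by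
  have hprim := zeta_prim p
  have hζp : zeta p ^ p = 1 := hprim.pow_eq_one
  set ψ : AddChar (ZMod p) ℂ := AddChar.zmodChar p hζp with hψdef
  have hψ : ∀ a : ZMod p, ψ a = zeta p ^ a.val := fun a => rfl
  have hψprim : AddChar.IsPrimitive ψ :=
    AddChar.zmodChar_primitive_of_primitive_root p hprim
  have hwalsh : ∀ (g : (Fin n → ZMod p) → ZMod p) (u : Fin n → ZMod p),
      walsh p n g u = ∑ x : Fin n → ZMod p, ψ (g x - ∑ i, u i * x i) := by
    intro g u; rfl
  -- orthogonality
  have horth : ∀ c : Fin n → ZMod p,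
      ∑ x : Fin n → ZMod p, ψ (∑ i, c i * x i) = if c = 0 then (p : ℂ) ^ n else 0 := by
    intro c
    have h1 : ∀ x : Fin n → ZMod p, ψ (∑ i, c i * x i) = ∏ i, ψ (c i * x i) := by
      intro x; exact addChar_map_sum ψ _ _
    simp_rw [h1]
    rw [← Fintype.prod_sum (fun i (t : ZMod p) => ψ (c i * t))]
    have h2 : ∀ i, (∑ t : ZMod p, ψ (c i * t)) = if c i = 0 then (p : ℂ) else 0 := by
      intro i
      have hms := AddChar.sum_mulShift (c i) hψprim
      rw [ZMod.card] at hms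
      calc ∑ t : ZMod p, ψ (c i * t) = ∑ t : ZMod p, ψ (t * c i) :=
            Finset.sum_congr rfl fun t _ => by rw [mul_comm]
        _ = _ := by rw [hms]; split_ifs <;> simp
    simp_rw [h2]
    by_cases hc : c = 0
    · simp [hc]
    · obtain ⟨i, hi⟩ := Function.ne_iff.mp hc
      rw [if_neg hc]
      exact Finset.prod_eq_zero (Finset.mem_univ i) (if_neg hi)
  set C : ℝ := (p : ℝ) ^ ((n : ℝ) / 2) with hCdef
  have hp0 : (0 : ℝ) < p := by exact_mod_cast hp.pos
  have hCpos : 0 < C := Real.rpow_pos_of_pos hp0 _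
  have hCne : (C : ℂ) ≠ 0 := by exact_mod_cast hCpos.ne'
  have hμne : μ ≠ 0 := by
    intro h; rw [h] at hμ; simp at hμ
  have hCC : (C : ℂ) * C = (p : ℂ) ^ n := by
    have hr : C * C = (p : ℝ) ^ n := by
      calc C * C = (p : ℝ) ^ ((n : ℝ) / 2 + (n : ℝ) / 2) := (Real.rpow_add hp0 _ _).symm
        _ = (p : ℝ) ^ (n : ℝ) := by norm_num
        _ = (p : ℝ) ^ n := Real.rpow_natCast _ n
    exact_mod_cast congrArg (Complex.ofReal) hr
  -- the key computation
  have key : ∀ u, walsh p n fstar u = μ⁻¹ * ψ (f (-u)) * C := by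
    intro u
    have hψf : ∀ x, ψ (fstar x) = walsh p n f x / (μ * C) := by
      intro x
      rw [hdual x, ← hψ]
      field_simp
    calc walsh p n fstar u
        = ∑ x : Fin n → ZMod p, ψ (fstar x) * ψ (- ∑ i, u i * x i) := by
          rw [hwalsh]
          refine Finset.sum_congr rfl fun x _ => ?_
          rw [← AddChar.map_add_eq_mul, sub_eq_add_neg]
      _ = (μ * C)⁻¹ * ∑ x : Fin n → ZMod p, walsh p n f x * ψ (- ∑ i, u i * x i) := by
          rw [Finset.mul_sum]
          refine Finset.sum_congr rfl fun x _ => ?_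
          rw [hψf x]; ring
      _ = (μ * C)⁻¹ * ∑ x : Fin n → ZMod p, ∑ y : Fin n → ZMod p,
            ψ (f y) * ψ (∑ i, (-(y + u)) i * x i) := by
          congr 1
          refine Finset.sum_congr rfl fun x _ => ?_
          rw [hwalsh, Finset.sum_mul]
          refine Finset.sum_congr rfl fun y _ => ?_
          rw [← AddChar.map_add_eq_mul, ← AddChar.map_add_eq_mul]
          congr 1
          have harg : ∑ i, (-(y + u)) i * x i
              = (- ∑ i, x i * y i) + (- ∑ i, u i * x i) := by
            have e1 : ∀ i ∈ Finset.univ, (-(y + u)) i * x i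
                = -(x i * y i) + -(u i * x i) := by
              intro i _
              simp only [Pi.neg_apply, Pi.add_apply]
              ring
            rw [Finset.sum_congr rfl e1, Finset.sum_add_distrib,
              Finset.sum_neg_distrib, Finset.sum_neg_distrib]
          rw [harg]
          ring
      _ = (μ * C)⁻¹ * ∑ y : Fin n → ZMod p,
            ψ (f y) * ∑ x : Fin n → ZMod p, ψ (∑ i, (-(y + u)) i * x i) := by
          rw [Finset.sum_comm]
          congr 1
          refine Finset.sum_congr rfl fun y _ => ?_
          rw [Finset.mul_sum]
      _ = (μ * C)⁻¹ * (ψ (f (-u)) * (p : ℂ) ^ n) := by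
          congr 1
          rw [Finset.sum_eq_single (-u)]
          · rw [horth, if_pos (by simp)]
          · intro y _ hy
            rw [horth, if_neg, mul_zero]
            intro h
            apply hy
            have h0 : y + u = 0 := neg_eq_zero.mp h
            exact eq_neg_of_add_eq_zero_left h0
          · intro h; exact absurd (Finset.mem_univ _) h
      _ = μ⁻¹ * ψ (f (-u)) * C := by
          rw [← hCC]
          field_simp
  refine ⟨?_, ?_, ?_⟩
  · intro u
    rw [key u, hψ]
    rw [norm_mul, norm_mul, norm_inv, hμ, norm_pow, abs_zeta, one_pow, Complex.norm_real, Real.norm_eq_abs]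
    rw [abs_of_pos hCpos]
    simp
  · intro u
    rw [key u, hψ]
  · intro heven
    have hfneg : (fun x => f (-x)) = f := funext fun x => heven x
    refine ⟨?_, hfneg⟩
    intro x
    have hW : walsh p n f (-x) = walsh p n f x := by
      rw [hwalsh, hwalsh]
      refine Fintype.sum_equiv (Equiv.neg _) _ _ fun y => ?_
      simp only [Equiv.neg_apply]
      congr 1
      rw [heven y]
      congr 1
      refine Finset.sum_congr rfl fun i _ => ?_
      simp only [Pi.neg_apply]
      ring
    have h1 : μ * zeta p ^ (fstar (-x)).val * (C : ℂ) = μ * zeta p ^ (fstar x).val * C := by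
      rw [← hdual, ← hdual, hW]
    have h2 : zeta p ^ (fstar (-x)).val = zeta p ^ (fstar x).val :=
      mul_left_cancel₀ hμne (mul_right_cancel₀ hCne h1)
    have h3 : (fstar (-x)).val = (fstar x).val :=
      hprim.pow_inj (ZMod.val_lt _) (ZMod.val_lt _) h2
    exact ZMod.val_injective p h3
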